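/- Let n ≥ 1 be an integer, θ > 0 and c > −1 real. Then ∫_{λ_1 > λ_2 > ... > λ_n > 0} (∏_{k=1}^n λ_k^c e^{−λ_k}) · ∏_{1≤j<k≤n} (λ_j − λ_k)(λ_j^θ − λ_k^θ) dλ_1⋯dλ_n = (∏_{l=1}^n Γ(θ(l−1) + c + 1)) · θ^{n(n−1)/2} · ∏_{l=1}^{n−1} l!. -/

import Mathlib

open MeasureTheory Finset Matrix Equiv

noncomputable def Gfun (θ c : ℝ) (a b : ℕ) : ℝ → ℝ :=
  fun t => (t ^ c * Real.exp (-t)) * (t ^ a * (t ^ θ) ^ b)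

lemma Gfun_exp_pos {θ c : ℝ} (hθ : 0 < θ) (hc : -1 < c) (a b : ℕ) :
    0 < θ * b + c + a + 1 := by
  have h1 : (0:ℝ) ≤ θ * b := by positivity
  have h2 : (0:ℝ) ≤ a := Nat.cast_nonneg a
  linarith

lemma Gfun_eq {θ c : ℝ} (a b : ℕ) {x : ℝ} (hx : 0 < x) :
    Real.exp (-x) * x ^ ((θ * b + c + a + 1) - 1) = Gfun θ c a b x := by
  unfold Gfun
  rw [← Real.rpow_natCast x a, ← Real.rpow_natCast (x ^ θ) b, ← Real.rpow_mul hx.le,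
    show (θ * b + c + a + 1) - 1 = c + ((a:ℝ) + θ * b) from by ring,
    Real.rpow_add hx, Real.rpow_add hx]
  ring

lemma Gfun_integrableOn {θ c : ℝ} (hθ : 0 < θ) (hc : -1 < c) (a b : ℕ) :
    IntegrableOn (Gfun θ c a b) (Set.Ioi 0) := by
  refine (Real.GammaIntegral_convergent (Gfun_exp_pos hθ hc a b)).congr_fun
    (fun x hx => Gfun_eq a b hx) measurableSet_Ioi

lemma Gfun_integral {θ c : ℝ} (hθ : 0 < θ) (hc : -1 < c) (a b : ℕ) :
    ∫ x in Set.Ioi 0, Gfun θ c a b x = Real.Gamma (θ * b + c + a + 1) := by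
  rw [Real.Gamma_eq_integral (Gfun_exp_pos hθ hc a b)]
  exact (setIntegral_congr_fun measurableSet_Ioi (fun x hx => (Gfun_eq a b hx))).symm

noncomputable def Tfun (θ c : ℝ) (a b : ℕ) : ℝ → ℝ :=
  (Set.Ioi (0:ℝ)).indicator (Gfun θ c a b)

lemma Tfun_integrable {θ c : ℝ} (hθ : 0 < θ) (hc : -1 < c) (a b : ℕ) :
    Integrable (Tfun θ c a b) :=
  (integrable_indicator_iff measurableSet_Ioi).2 (Gfun_integrableOn hθ hc a b)

lemma Tfun_integral {θ c : ℝ} (hθ : 0 < θ) (hc : -1 < c) (a b : ℕ) :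
    ∫ x, Tfun θ c a b x = Real.Gamma (θ * b + c + a + 1) := by
  rw [Tfun, integral_indicator measurableSet_Ioi]
  exact Gfun_integral hθ hc a b

section main
variable {n : ℕ} (θ c : ℝ)

/-- The symmetrized integrand. -/
noncomputable def Ffun : (Fin n → ℝ) → ℝ := fun x =>
  (∏ k, x k ^ c * Real.exp (-x k)) *
    ((Matrix.vandermonde x).det * (Matrix.vandermonde (fun k => x k ^ θ)).det)

lemma Ffun_expand (x : Fin n → ℝ) :
    Ffun θ c x = ∑ σ : Perm (Fin n), ∑ τ : Perm (Fin n),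
      (((Perm.sign σ : ℤ) : ℝ) * ((Perm.sign τ : ℤ) : ℝ)) *
        ∏ k, Gfun θ c ((σ.symm k : Fin n) : ℕ) ((τ.symm k : Fin n) : ℕ) (x k) := by
  rw [Ffun, Matrix.det_apply', Matrix.det_apply', Finset.sum_mul_sum, Finset.mul_sum]
  refine Finset.sum_congr rfl (fun σ _ => ?_)
  rw [Finset.mul_sum]
  refine Finset.sum_congr rfl (fun τ _ => ?_)
  have h1 : ∏ i, Matrix.vandermonde x (σ i) i = ∏ k, x k ^ ((σ.symm k : Fin n) : ℕ) := by
    rw [← Equiv.prod_comp σ (fun k => x k ^ ((σ.symm k : Fin n) : ℕ))]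
    simp [Matrix.vandermonde]
  have h2 : ∏ i, Matrix.vandermonde (fun k => x k ^ θ) (τ i) i
      = ∏ k, (x k ^ θ) ^ ((τ.symm k : Fin n) : ℕ) := by
    rw [← Equiv.prod_comp τ (fun k => (x k ^ θ) ^ ((τ.symm k : Fin n) : ℕ))]
    simp [Matrix.vandermonde]
  rw [h1, h2]
  simp only [Gfun]
  rw [Finset.prod_mul_distrib, Finset.prod_mul_distrib, Finset.prod_mul_distrib,
    Finset.prod_mul_distrib]
  ring

lemma indicator_prod_eq (σ τ : Perm (Fin n)) (x : Fin n → ℝ) :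
    Set.indicator {y : Fin n → ℝ | ∀ i, 0 < y i}
      (fun y => ∏ k, Gfun θ c ((σ.symm k : Fin n) : ℕ) ((τ.symm k : Fin n) : ℕ) (y k)) x
    = ∏ k, Tfun θ c ((σ.symm k : Fin n) : ℕ) ((τ.symm k : Fin n) : ℕ) (x k) := by
  by_cases hx : x ∈ {y : Fin n → ℝ | ∀ i, 0 < y i}
  · rw [Set.indicator_of_mem hx]
    refine Finset.prod_congr rfl (fun k _ => ?_)
    rw [Tfun, Set.indicator_of_mem (Set.mem_Ioi.mpr (hx k))]
  · rw [Set.indicator_of_notMem hx]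
    have : ∃ i, ¬ (0 < x i) := by simpa [Set.mem_setOf_eq] using hx
    obtain ⟨i, hi⟩ := this
    refine (Finset.prod_eq_zero (Finset.mem_univ i) ?_).symm
    rw [Tfun, Set.indicator_of_notMem (fun h => hi (Set.mem_Ioi.mp h))]

variable (hθ : 0 < θ) (hc : -1 < c)

lemma measurableSet_pos : MeasurableSet {y : Fin n → ℝ | ∀ i, 0 < y i} := by
  have : {y : Fin n → ℝ | ∀ i, 0 < y i} = ⋂ i, {y : Fin n → ℝ | 0 < y i} := by
    ext y; simp
  rw [this]
  exact MeasurableSet.iInter fun i =>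
    measurableSet_lt measurable_const (measurable_pi_apply i)

include hθ hc in
lemma term_integrableOn (σ τ : Perm (Fin n)) :
    IntegrableOn (fun y => ∏ k, Gfun θ c ((σ.symm k : Fin n) : ℕ) ((τ.symm k : Fin n) : ℕ) (y k))
      {y : Fin n → ℝ | ∀ i, 0 < y i} := by
  rw [← integrable_indicator_iff (measurableSet_pos)]
  have : Set.indicator {y : Fin n → ℝ | ∀ i, 0 < y i}
      (fun y => ∏ k, Gfun θ c ((σ.symm k : Fin n) : ℕ) ((τ.symm k : Fin n) : ℕ) (y k))
      = fun x => ∏ k, Tfun θ c ((σ.symm k : Fin n) : ℕ) ((τ.symm k : Fin n) : ℕ) (x k) := by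
    funext x; exact indicator_prod_eq θ c σ τ x
  rw [this]
  exact Integrable.fintype_prod (fun k => Tfun_integrable hθ hc _ _)

include hθ hc in
lemma term_integral (σ τ : Perm (Fin n)) :
    ∫ y in {y : Fin n → ℝ | ∀ i, 0 < y i},
        ∏ k, Gfun θ c ((σ.symm k : Fin n) : ℕ) ((τ.symm k : Fin n) : ℕ) (y k)
      = ∏ k, Real.Gamma (θ * ((τ.symm k : Fin n) : ℕ) + c + ((σ.symm k : Fin n) : ℕ) + 1) := by
  rw [← integral_indicator (measurableSet_pos)]
  have : Set.indicator {y : Fin n → ℝ | ∀ i, 0 < y i}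
      (fun y => ∏ k, Gfun θ c ((σ.symm k : Fin n) : ℕ) ((τ.symm k : Fin n) : ℕ) (y k))
      = fun x => ∏ k, Tfun θ c ((σ.symm k : Fin n) : ℕ) ((τ.symm k : Fin n) : ℕ) (x k) := by
    funext x; exact indicator_prod_eq θ c σ τ x
  rw [this, MeasureTheory.integral_fintype_prod_volume_eq_prod
    (fun k => Tfun θ c ((σ.symm k : Fin n) : ℕ) ((τ.symm k : Fin n) : ℕ))]
  exact Finset.prod_congr rfl (fun k _ => Tfun_integral hθ hc _ _)

include hθ hc in
lemma Ffun_integrableOn :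
    IntegrableOn (Ffun θ c (n := n)) {y : Fin n → ℝ | ∀ i, 0 < y i} := by
  have : Ffun θ c (n := n) = fun x => ∑ σ : Perm (Fin n), ∑ τ : Perm (Fin n),
      (((Perm.sign σ : ℤ) : ℝ) * ((Perm.sign τ : ℤ) : ℝ)) *
        ∏ k, Gfun θ c ((σ.symm k : Fin n) : ℕ) ((τ.symm k : Fin n) : ℕ) (x k) := by
    funext x; exact Ffun_expand θ c x
  rw [this]
  refine integrable_finset_sum _ (fun σ _ => integrable_finset_sum _ (fun τ _ => ?_))
  exact (term_integrableOn θ c hθ hc σ τ).const_mul _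

include hθ hc in
lemma integral_pos_region :
    ∫ y in {y : Fin n → ℝ | ∀ i, 0 < y i}, Ffun θ c y
      = (n.factorial : ℝ) *
        (Matrix.of (fun i j : Fin n => Real.Gamma (θ * (j:ℝ) + c + (i:ℝ) + 1))).det := by
  have hexp : ∀ x, Ffun θ c x = ∑ σ : Perm (Fin n), ∑ τ : Perm (Fin n),
      (((Perm.sign σ : ℤ) : ℝ) * ((Perm.sign τ : ℤ) : ℝ)) *
        ∏ k, Gfun θ c ((σ.symm k : Fin n) : ℕ) ((τ.symm k : Fin n) : ℕ) (x k) :=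
    Ffun_expand θ c
  calc ∫ y in {y : Fin n → ℝ | ∀ i, 0 < y i}, Ffun θ c y
      = ∑ σ : Perm (Fin n), ∑ τ : Perm (Fin n),
          (((Perm.sign σ : ℤ) : ℝ) * ((Perm.sign τ : ℤ) : ℝ)) *
          ∏ k, Real.Gamma (θ * ((τ.symm k : Fin n) : ℕ) + c + ((σ.symm k : Fin n) : ℕ) + 1) := by
        simp_rw [hexp]
        rw [integral_finset_sum _ (fun σ _ => integrable_finset_sum _
          (fun τ _ => ((term_integrableOn θ c hθ hc σ τ).const_mul _)))]
        refine Finset.sum_congr rfl (fun σ _ => ?_)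
        rw [integral_finset_sum _ (fun τ _ => ((term_integrableOn θ c hθ hc σ τ).const_mul _))]
        refine Finset.sum_congr rfl (fun τ _ => ?_)
        rw [integral_const_mul, term_integral θ c hθ hc σ τ]
    _ = (n.factorial : ℝ) *
        (Matrix.of (fun i j : Fin n => Real.Gamma (θ * (j:ℝ) + c + (i:ℝ) + 1))).det := by
        have key : ∀ σ τ : Perm (Fin n),
            (((Perm.sign σ : ℤ) : ℝ) * ((Perm.sign τ : ℤ) : ℝ)) *
            ∏ k, Real.Gamma (θ * ((τ.symm k : Fin n) : ℕ) + c + ((σ.symm k : Fin n) : ℕ) + 1)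
            = ((Perm.sign (σ.trans τ.symm) : ℤ) : ℝ) *
              ∏ j, Real.Gamma (θ * (((σ.trans τ.symm) j : Fin n) : ℕ) + c + (j : ℕ) + 1) := by
          intro σ τ
          congr 1
          · have : σ.trans τ.symm = τ⁻¹ * σ := rfl
            rw [this, _root_.map_mul, Equiv.Perm.sign_inv]
            push_cast
            ring
          · rw [← Equiv.prod_comp σ
              (fun k => Real.Gamma (θ * ((τ.symm k : Fin n) : ℕ) + c + ((σ.symm k : Fin n) : ℕ) + 1))]
            refine Finset.prod_congr rfl (fun j _ => ?_)
            simp [Equiv.symm_apply_apply]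
        simp_rw [key]
        have reind : ∀ σ : Perm (Fin n),
            ∑ τ : Perm (Fin n), ((Perm.sign (σ.trans τ.symm) : ℤ) : ℝ) *
              ∏ j, Real.Gamma (θ * (((σ.trans τ.symm) j : Fin n) : ℕ) + c + (j : ℕ) + 1)
            = ∑ ρ : Perm (Fin n), ((Perm.sign ρ : ℤ) : ℝ) *
              ∏ j, Real.Gamma (θ * ((ρ j : Fin n) : ℕ) + c + (j : ℕ) + 1) := by
          intro σ
          have e : Perm (Fin n) ≃ Perm (Fin n) :=
            (Equiv.inv (Perm (Fin n))).trans (Equiv.mulRight σ)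
          refine Fintype.sum_equiv ((Equiv.inv (Perm (Fin n))).trans (Equiv.mulRight σ))
            _ _ (fun τ => ?_)
          have : σ.trans τ.symm = τ⁻¹ * σ := rfl
          rw [this]
          rfl
        simp_rw [reind]
        rw [Finset.sum_const, Finset.card_univ, Fintype.card_perm, Fintype.card_fin,
          nsmul_eq_mul]
        congr 1
        have htr : (Matrix.of (fun i j : Fin n => Real.Gamma (θ * (j:ℝ) + c + (i:ℝ) + 1))).det
            = (Matrix.of (fun a b : Fin n => Real.Gamma (θ * (a:ℝ) + c + (b:ℝ) + 1))).det := by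
          rw [← Matrix.det_transpose]
          rfl
        rw [htr, Matrix.det_apply']
        refine Finset.sum_congr rfl (fun ρ _ => ?_)
        simp [Matrix.of_apply]



def Sset (n : ℕ) : Set (Fin n → ℝ) :=
  {lam : Fin n → ℝ | (∀ i j : Fin n, i < j → lam j < lam i) ∧ ∀ i, 0 < lam i}

lemma measurableSet_Sset : MeasurableSet (Sset n) := by
  have : Sset n = (⋂ i, ⋂ j, ⋂ (_ : i < j), {lam : Fin n → ℝ | lam j < lam i}) ∩
      ⋂ i, {lam : Fin n → ℝ | 0 < lam i} := by
    ext lam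
    simp [Sset, Set.mem_iInter, forall_and]
  rw [this]
  exact MeasurableSet.inter
    (MeasurableSet.iInter fun i => MeasurableSet.iInter fun j => MeasurableSet.iInter fun _ =>
      measurableSet_lt (measurable_pi_apply j) (measurable_pi_apply i))
    (MeasurableSet.iInter fun i =>
      measurableSet_lt measurable_const (measurable_pi_apply i))

lemma comp_measurePreserving (σ : Perm (Fin n)) :
    MeasurePreserving (fun x : Fin n → ℝ => x ∘ σ) volume volume := by
  have h := volume_measurePreserving_piCongrLeft (fun _ : Fin n => ℝ) σ.symm
  have hco : ⇑(MeasurableEquiv.piCongrLeft (fun _ : Fin n => ℝ) σ.symm)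
      = (fun x : Fin n → ℝ => x ∘ σ) := by
    funext x
    funext i
    have h2 := Equiv.piCongrLeft_apply_apply (fun _ : Fin n => ℝ) σ.symm x (σ i)
    simpa [MeasurableEquiv.coe_piCongrLeft] using h2
  rwa [hco] at h

lemma comp_measurableEmbedding (σ : Perm (Fin n)) :
    MeasurableEmbedding (fun x : Fin n → ℝ => x ∘ σ) := by
  have hco : ⇑(MeasurableEquiv.piCongrLeft (fun _ : Fin n => ℝ) σ.symm)
      = (fun x : Fin n → ℝ => x ∘ σ) := by
    funext x
    funext i
    have h2 := Equiv.piCongrLeft_apply_apply (fun _ : Fin n => ℝ) σ.symm x (σ i)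
    simpa [MeasurableEquiv.coe_piCongrLeft] using h2
  rw [← hco]
  exact (MeasurableEquiv.piCongrLeft (fun _ : Fin n => ℝ) σ.symm).measurableEmbedding

lemma sign_sq (σ : Perm (Fin n)) :
    ((Perm.sign σ : ℤ) : ℝ) * ((Perm.sign σ : ℤ) : ℝ) = 1 := by
  rw [← Int.cast_mul, ← Units.val_mul, ← sq, Int.units_sq, Units.val_one, Int.cast_one]

lemma Ffun_comp (σ : Perm (Fin n)) (x : Fin n → ℝ) :
    Ffun θ c (x ∘ σ) = Ffun θ c x := by
  unfold Ffun
  have h1 : ∏ k, (x ∘ σ) k ^ c * Real.exp (-(x ∘ σ) k)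
      = ∏ k, x k ^ c * Real.exp (-x k) :=
    Equiv.prod_comp σ (fun k => x k ^ c * Real.exp (-x k))
  have h2 : Matrix.vandermonde (x ∘ σ) = (Matrix.vandermonde x).submatrix σ id := by
    ext i j; rfl
  have h3 : Matrix.vandermonde ((fun k => x k ^ θ) ∘ σ)
      = (Matrix.vandermonde (fun k => x k ^ θ)).submatrix σ id := by
    ext i j; rfl
  have h4 : (fun k => (x ∘ σ) k ^ θ) = (fun k => x k ^ θ) ∘ σ := rfl
  rw [h1, h2, h4, h3, Matrix.det_permute, Matrix.det_permute]
  have : ∀ a b : ℝ, (((Perm.sign σ : ℤ) : ℝ) * a) * (((Perm.sign σ : ℤ) : ℝ) * b) = a * b := by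
    intro a b
    calc (((Perm.sign σ : ℤ) : ℝ) * a) * (((Perm.sign σ : ℤ) : ℝ) * b)
        = (((Perm.sign σ : ℤ) : ℝ) * ((Perm.sign σ : ℤ) : ℝ)) * (a * b) := by ring
      _ = a * b := by rw [sign_sq σ, one_mul]
  rw [this]

lemma setIntegral_T (σ : Perm (Fin n)) :
    ∫ x in (fun x : Fin n → ℝ => x ∘ σ) ⁻¹' (Sset n), Ffun θ c x
      = ∫ x in Sset n, Ffun θ c x := by
  have hmeas : MeasurableSet ((fun x : Fin n → ℝ => x ∘ σ) ⁻¹' (Sset n)) :=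
    (comp_measurableEmbedding σ).measurable (measurableSet_Sset)
  calc ∫ x in (fun x : Fin n → ℝ => x ∘ σ) ⁻¹' (Sset n), Ffun θ c x
      = ∫ x in (fun x : Fin n → ℝ => x ∘ σ) ⁻¹' (Sset n), Ffun θ c (x ∘ σ) := by
        refine setIntegral_congr_fun hmeas (fun x _ => ?_)
        rw [Ffun_comp]
    _ = ∫ x in Sset n, Ffun θ c x :=
        (comp_measurePreserving σ).setIntegral_preimage_emb
          (comp_measurableEmbedding σ) _ _

lemma T_disjoint {σ τ : Perm (Fin n)} (hστ : σ ≠ τ) :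
    Disjoint ((fun x : Fin n → ℝ => x ∘ σ) ⁻¹' (Sset n))
      ((fun x : Fin n → ℝ => x ∘ τ) ⁻¹' (Sset n)) := by
  rw [Set.disjoint_left]
  rintro x hxσ hxτ
  have hg : StrictAnti (x ∘ σ) := fun i j h => hxσ.1 i j h
  have hh : StrictAnti (x ∘ τ) := fun i j h => hxτ.1 i j h
  set u : Perm (Fin n) := τ.trans σ.symm with hu
  have hcomp : ∀ j, (x ∘ τ) j = (x ∘ σ) (u j) := by
    intro j
    simp [hu, Function.comp]
  have hmono : StrictMono (u : Fin n → Fin n) := by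
    intro i j hij
    have : (x ∘ σ) (u j) < (x ∘ σ) (u i) := by
      rw [← hcomp i, ← hcomp j]
      exact hh hij
    exact hg.lt_iff_gt.mp this
  have hrange : Set.range (u : Fin n → Fin n) = Set.range (id : Fin n → Fin n) := by
    rw [Set.range_id]
    exact Set.range_eq_univ.mpr u.surjective
  haveI : WellFoundedLT (Fin n) := inferInstance
  have : (u : Fin n → Fin n) = id :=
    (StrictMono.range_inj (β := Fin n) (γ := Fin n) hmono strictMono_id).1 hrange
  apply hστ
  have h5 : ∀ i, σ.symm (τ i) = i := fun i => congrFun this i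
  ext i
  have h6 := congrArg σ (h5 i)
  simp only [Equiv.apply_symm_apply] at h6
  exact congrArg Fin.val h6.symm

lemma diag_null :
    volume (⋃ i, ⋃ j, ⋃ (_ : i ≠ j), {x : Fin n → ℝ | x i = x j}) = 0 := by
  refine measure_iUnion_null fun i => measure_iUnion_null fun j => measure_iUnion_null fun hij => ?_
  have : {x : Fin n → ℝ | x i = x j} =
      ↑(LinearMap.ker ((LinearMap.proj i : (Fin n → ℝ) →ₗ[ℝ] ℝ) - LinearMap.proj j)) := by
    ext x; simp [LinearMap.mem_ker, sub_eq_zero]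
  rw [this]
  apply MeasureTheory.Measure.addHaar_submodule
  intro htop
  have h1 : (Pi.single i 1 : Fin n → ℝ) ∈
      LinearMap.ker ((LinearMap.proj i : (Fin n → ℝ) →ₗ[ℝ] ℝ) - LinearMap.proj j) := by
    rw [htop]; trivial
  simp [LinearMap.mem_ker, Pi.single_eq_of_ne hij.symm] at h1

lemma T_cover :
    {y : Fin n → ℝ | ∀ i, 0 < y i} \
        (⋃ i, ⋃ j, ⋃ (_ : i ≠ j), {x : Fin n → ℝ | x i = x j})
      ⊆ ⋃ σ : Perm (Fin n), (fun x : Fin n → ℝ => x ∘ σ) ⁻¹' (Sset n) := by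
  rintro x ⟨hxP, hxN⟩
  have hinj : Function.Injective x := by
    intro i j hij
    by_contra hne
    exact hxN (Set.mem_iUnion.mpr ⟨i, Set.mem_iUnion.mpr ⟨j, Set.mem_iUnion.mpr ⟨hne, hij⟩⟩⟩)
  set s := Tuple.sort x with hs
  have hmono : StrictMono (x ∘ s) :=
    (Tuple.monotone_sort x).strictMono_of_injective (hinj.comp s.injective)
  have hanti : StrictAnti (x ∘ (Fin.revPerm.trans s)) := by
    intro i j hij
    exact hmono (by simpa using Fin.rev_lt_rev.mpr hij)
  refine Set.mem_iUnion.mpr ⟨Fin.revPerm.trans s, ?_⟩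
  constructor
  · intro i j hij
    exact hanti hij
  · intro i
    exact hxP _

lemma ordered_eq_pos_div (hF : IntegrableOn (Ffun θ c (n := n)) {y : Fin n → ℝ | ∀ i, 0 < y i}) :
    ∫ y in {y : Fin n → ℝ | ∀ i, 0 < y i}, Ffun θ c y
      = (n.factorial : ℝ) * ∫ y in Sset n, Ffun θ c y := by
  set T : Perm (Fin n) → Set (Fin n → ℝ) :=
    fun σ => (fun x : Fin n → ℝ => x ∘ σ) ⁻¹' (Sset n) with hT
  have hTmeas : ∀ σ, MeasurableSet (T σ) :=
    fun σ => (comp_measurableEmbedding σ).measurable (measurableSet_Sset)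
  have hTsub : ∀ σ, T σ ⊆ {y : Fin n → ℝ | ∀ i, 0 < y i} := by
    intro σ x hx i
    have := hx.2 (σ.symm i)
    simpa using this
  have hae : (⋃ σ ∈ (Finset.univ : Finset (Perm (Fin n))), T σ)
      =ᵐ[volume] {y : Fin n → ℝ | ∀ i, 0 < y i} := by
    rw [ae_eq_set]
    constructor
    · have : (⋃ σ ∈ (Finset.univ : Finset (Perm (Fin n))), T σ) \
          {y : Fin n → ℝ | ∀ i, 0 < y i} = ∅ := by
        rw [Set.diff_eq_empty]
        intro x hx
        obtain ⟨σ, _, hσ⟩ := Set.mem_iUnion₂.mp hx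
        exact hTsub σ hσ
      rw [this]; exact measure_empty
    · refine measure_mono_null ?_ diag_null
      intro x hx
      by_contra hxN
      refine hx.2 ?_
      have := T_cover (n := n) ⟨hx.1, hxN⟩
      obtain ⟨σ, hσ⟩ := Set.mem_iUnion.mp this
      exact Set.mem_iUnion₂.mpr ⟨σ, Finset.mem_univ σ, hσ⟩
  calc ∫ y in {y : Fin n → ℝ | ∀ i, 0 < y i}, Ffun θ c y
      = ∫ y in ⋃ σ ∈ (Finset.univ : Finset (Perm (Fin n))), T σ, Ffun θ c y :=
        (setIntegral_congr_set hae).symm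
    _ = ∑ σ : Perm (Fin n), ∫ y in T σ, Ffun θ c y := by
        refine integral_biUnion_finset Finset.univ (fun σ _ => hTmeas σ) ?_
          (fun σ _ => hF.mono_set (hTsub σ))
        intro σ _ τ _ hστ
        exact T_disjoint hστ
    _ = ∑ σ : Perm (Fin n), ∫ y in Sset n, Ffun θ c y :=
        Finset.sum_congr rfl (fun σ _ => setIntegral_T θ c σ)
    _ = (n.factorial : ℝ) * ∫ y in Sset n, Ffun θ c y := by
        rw [Finset.sum_const, Finset.card_univ, Fintype.card_perm, Fintype.card_fin,
          nsmul_eq_mul]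

end main


private lemma gammaShift (s : ℝ) (hs : 0 < s) (i : ℕ) :
    Real.Gamma (s + i) = (ascPochhammer ℝ i).eval s * Real.Gamma s := by
  induction i with
  | zero => simp
  | succ i ih =>
    have h1 : s + (i + 1 : ℕ) = (s + i) + 1 := by push_cast; ring
    have h2 : s + (i:ℝ) ≠ 0 := by positivity
    rw [h1, Real.Gamma_add_one h2, ih, ascPochhammer_succ_eval]
    ring

private lemma prod_Ioi_nat {n : ℕ} (i : Fin n) :
    ∏ j ∈ Finset.Ioi i, ((j : ℕ) - (i : ℕ)) = Nat.factorial (n - 1 - i) := by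
  rw [show (∏ j ∈ Finset.Ioi i, ((j : ℕ) - (i : ℕ)))
      = ∏ m ∈ (Finset.Ioi i).map Fin.valEmbedding, (m - (i:ℕ)) from
      (Finset.prod_map (Finset.Ioi i) Fin.valEmbedding (fun m => m - (i:ℕ))).symm, Fin.map_valEmbedding_Ioi,
    ← Finset.prod_range_add_one_eq_factorial]
  have hin := i.isLt
  apply Finset.prod_nbij' (fun m => m - (i:ℕ) - 1) (fun k => (i:ℕ) + 1 + k)
  · intro a ha; simp only [Finset.mem_Ioo] at ha; simp only [Finset.mem_range]; omega
  · intro a ha; simp only [Finset.mem_range] at ha; simp only [Finset.mem_Ioo]; omega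
  · intro a ha; simp only [Finset.mem_Ioo] at ha; omega
  · intro a ha; simp only [Finset.mem_range] at ha; omega
  · intro a ha; simp only [Finset.mem_Ioo] at ha; omega

private lemma detB {n : ℕ} (θ c : ℝ) (hθ : 0 < θ) (hc : -1 < c) :
    (Matrix.of (fun i j : Fin n => Real.Gamma (θ * (j:ℝ) + c + (i:ℝ) + 1))).det
      = (∏ l : Fin n, Real.Gamma (θ * (l : ℝ) + c + 1)) * θ ^ (n * (n - 1) / 2) *
        ∏ l ∈ Finset.range n, (Nat.factorial l : ℝ) := by
  have hx : ∀ j : Fin n, (0:ℝ) < θ * (j:ℝ) + c + 1 := by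
    intro j
    have : (0:ℝ) ≤ θ * j := by positivity
    linarith
  have hM : ∀ i j : Fin n, Real.Gamma (θ * (j:ℝ) + c + (i:ℝ) + 1)
      = Real.Gamma (θ * (j:ℝ) + c + 1) * (ascPochhammer ℝ (i:ℕ)).eval (θ * (j:ℝ) + c + 1) := by
    intro i j
    have : θ * (j:ℝ) + c + (i:ℝ) + 1 = (θ * (j:ℝ) + c + 1) + ((i:ℕ):ℝ) := by push_cast; ring
    rw [this, gammaShift _ (hx j), mul_comm]
  have step1 : (Matrix.of (fun i j : Fin n => Real.Gamma (θ * (j:ℝ) + c + (i:ℝ) + 1))).det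
      = (∏ l : Fin n, Real.Gamma (θ * (l : ℝ) + c + 1)) *
        (Matrix.of (fun i j : Fin n => (ascPochhammer ℝ (i:ℕ)).eval (θ * (j:ℝ) + c + 1))).det := by
    rw [← Matrix.det_mul_row]
    congr 1
    ext i j
    simp only [Matrix.of_apply]
    exact hM i j
  rw [step1]
  have step2 : (Matrix.of (fun i j : Fin n => (ascPochhammer ℝ (i:ℕ)).eval (θ * (j:ℝ) + c + 1))).det
      = (Matrix.vandermonde (fun j : Fin n => θ * (j:ℝ) + c + 1)).det := by
    rw [Matrix.det_eval_matrixOfPolynomials_eq_det_vandermonde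
      (fun j : Fin n => θ * (j:ℝ) + c + 1) (fun i => ascPochhammer ℝ (i:ℕ))
      (fun i => ascPochhammer_natDegree ℝ (i:ℕ)) (fun i => monic_ascPochhammer ℝ (i:ℕ))]
    exact Matrix.det_transpose _
  rw [step2, Matrix.det_vandermonde]
  have hfac : ∀ i j : Fin n, i < j →
      (θ * (j:ℝ) + c + 1) - (θ * (i:ℝ) + c + 1) = θ * ((j:ℝ) - (i:ℝ)) := by
    intro i j _; ring
  have : ∏ i : Fin n, ∏ j ∈ Finset.Ioi i, ((θ * (j:ℝ) + c + 1) - (θ * (i:ℝ) + c + 1))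
      = ∏ i : Fin n, (θ ^ (n - 1 - (i:ℕ)) * (Nat.factorial (n - 1 - i) : ℝ)) := by
    apply Finset.prod_congr rfl
    intro i _
    have : ∏ j ∈ Finset.Ioi i, ((θ * (j:ℝ) + c + 1) - (θ * (i:ℝ) + c + 1))
        = ∏ j ∈ Finset.Ioi i, (θ * ((j:ℝ) - (i:ℝ))) := by
      apply Finset.prod_congr rfl
      intro j hj
      exact hfac i j (Finset.mem_Ioi.mp hj)
    rw [this, Finset.prod_mul_distrib, Finset.prod_const, Fin.card_Ioi]
    congr 1
    have : ∏ j ∈ Finset.Ioi i, ((j:ℝ) - (i:ℝ))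
        = ((∏ j ∈ Finset.Ioi i, ((j:ℕ) - (i:ℕ)) : ℕ) : ℝ) := by
      rw [Nat.cast_prod]
      apply Finset.prod_congr rfl
      intro j hj
      have hij : (i:ℕ) ≤ (j:ℕ) := le_of_lt (Fin.lt_def.mp (Finset.mem_Ioi.mp hj))
      rw [Nat.cast_sub hij]
    rw [this, prod_Ioi_nat]
  rw [this, Finset.prod_mul_distrib, Finset.prod_pow_eq_pow_sum]
  have hsum : ∑ i : Fin n, (n - 1 - (i:ℕ)) = n * (n - 1) / 2 := by
    rw [Fin.sum_univ_eq_sum_range (fun i => n - 1 - i)]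
    rw [Finset.sum_range_reflect (fun i => i) n]
    exact Finset.sum_range_id n
  have hfact : ∏ i : Fin n, ((Nat.factorial (n - 1 - (i:ℕ))) : ℝ)
      = ∏ l ∈ Finset.range n, (Nat.factorial l : ℝ) := by
    rw [Fin.prod_univ_eq_prod_range (fun i => ((Nat.factorial (n - 1 - i)) : ℝ))]
    exact Finset.prod_range_reflect (fun i => ((Nat.factorial i) : ℝ)) n
  rw [hsum, hfact]
  ring


theorem stmt_2 (n : ℕ) (hn : 1 ≤ n) (θ c : ℝ) (hθ : 0 < θ) (hc : -1 < c) :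
    ∫ lam in {lam : Fin n → ℝ | (∀ i j : Fin n, i < j → lam j < lam i) ∧ ∀ i, 0 < lam i},
      (∏ k, lam k ^ c * Real.exp (-lam k)) *
        ∏ j, ∏ k ∈ Finset.Ioi j, ((lam j - lam k) * (lam j ^ θ - lam k ^ θ))
    = (∏ l : Fin n, Real.Gamma (θ * (l : ℝ) + c + 1)) * θ ^ (n * (n - 1) / 2) *
        ∏ l ∈ Finset.range n, (Nat.factorial l : ℝ) := by
  have hint : ∀ lam : Fin n → ℝ,
      (∏ k, lam k ^ c * Real.exp (-lam k)) *
        ∏ j, ∏ k ∈ Finset.Ioi j, ((lam j - lam k) * (lam j ^ θ - lam k ^ θ))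
      = Ffun θ c lam := by
    intro lam
    unfold Ffun
    congr 1
    calc ∏ j, ∏ k ∈ Finset.Ioi j, ((lam j - lam k) * (lam j ^ θ - lam k ^ θ))
        = ∏ j, ∏ k ∈ Finset.Ioi j, ((lam k - lam j) * (lam k ^ θ - lam j ^ θ)) := by
          refine Finset.prod_congr rfl fun j _ => Finset.prod_congr rfl fun k _ => by ring
      _ = (∏ j, ∏ k ∈ Finset.Ioi j, (lam k - lam j)) *
          (∏ j, ∏ k ∈ Finset.Ioi j, (lam k ^ θ - lam j ^ θ)) := by
          rw [← Finset.prod_mul_distrib]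
          exact Finset.prod_congr rfl fun j _ => Finset.prod_mul_distrib
      _ = (Matrix.vandermonde lam).det * (Matrix.vandermonde (fun k => lam k ^ θ)).det := by
          rw [Matrix.det_vandermonde, Matrix.det_vandermonde]
  have hFi := Ffun_integrableOn θ c hθ hc (n := n)
  have h1 := ordered_eq_pos_div θ c (n := n) hFi
  have h2 := integral_pos_region θ c hθ hc (n := n)
  have hS : ∫ y in Sset n, Ffun θ c y
      = (Matrix.of (fun i j : Fin n => Real.Gamma (θ * (j:ℝ) + c + (i:ℝ) + 1))).det := by
    apply mul_left_cancel₀ (a := (n.factorial : ℝ)) (Nat.cast_ne_zero.mpr n.factorial_ne_zero)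
    rw [← h1, h2]
  have hrw : ∫ lam in Sset n,
      ((∏ k, lam k ^ c * Real.exp (-lam k)) *
        ∏ j, ∏ k ∈ Finset.Ioi j, ((lam j - lam k) * (lam j ^ θ - lam k ^ θ)))
      = ∫ y in Sset n, Ffun θ c y :=
    integral_congr_ae (Filter.Eventually.of_forall fun x => hint x)
  exact hrw.trans (hS.trans (detB θ c hθ hc))
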